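/- For every graphon W and every positive integer n, t(K_{2n,2n}, W) ≥ t(K_{2,2}, W)^{n²}, where K_{a,b} denotes the complete bipartite graph. -/

import Mathlib

open MeasureTheory

noncomputable section

/-- The Lebesgue measure restricted to `[0,1]`. -/
abbrev muI : Measure ℝ := volume.restrict (Set.Icc 0 1)

/-- A graphon: a symmetric measurable function `[0,1]² → [0,1]`
(represented as a function on `ℝ²`). -/
def IsGraphon (W : ℝ → ℝ → ℝ) : Prop :=
  Measurable (Function.uncurry W) ∧ (∀ x y, W x y = W y x) ∧
    (∀ x y, W x y ∈ Set.Icc (0:ℝ) 1)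

/-- The edges of a graph on `Fin m`, each listed once as an ordered pair. -/
def edgeFinset' {m : ℕ} (G : SimpleGraph (Fin m)) [DecidableRel G.Adj] :
    Finset (Fin m × Fin m) :=
  Finset.univ.filter fun p => p.1 < p.2 ∧ G.Adj p.1 p.2

/-- The number of edges of `G`. -/
def edgeCount {m : ℕ} (G : SimpleGraph (Fin m)) [DecidableRel G.Adj] : ℕ :=
  (edgeFinset' G).card

/-- The homomorphism density `t(G, W)`. -/
def homDensity {m : ℕ} (G : SimpleGraph (Fin m)) [DecidableRel G.Adj]
    (W : ℝ → ℝ → ℝ) : ℝ :=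
  ∫ x : Fin m → ℝ, ∏ p ∈ edgeFinset' G, W (x p.1) (x p.2)
    ∂(Measure.pi fun _ => muI)

/-- The single-edge graph `K₂`. -/
abbrev K2 : SimpleGraph (Fin 2) := ⊤

/-- The complete bipartite graph `K_{a,b}` on `Fin (a+b)`. -/
def bip (a b : ℕ) : SimpleGraph (Fin (a + b)) where
  Adj i j := (decide (i.val < a)) ≠ (decide (j.val < a))
  symm := ⟨fun _ _ h => h.symm⟩
  loopless := ⟨fun _ h => h rfl⟩

instance (a b : ℕ) : DecidableRel (bip a b).Adj :=
  fun i j => inferInstanceAs (Decidable (_ ≠ _))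

/-- The cycle `C_n` on `Fin n` (for `n ≥ 3`). -/
def cyc (n : ℕ) : SimpleGraph (Fin n) where
  Adj i j := i ≠ j ∧ ((i.val + 1) % n = j.val ∨ (j.val + 1) % n = i.val)
  symm := ⟨fun _ _ h => ⟨h.1.symm, h.2.symm⟩⟩
  loopless := ⟨fun _ h => h.1 rfl⟩

instance (n : ℕ) : DecidableRel (cyc n).Adj :=
  fun i j => inferInstanceAs (Decidable (_ ∧ _))

/-! ### Auxiliary lemmas -/

instance : IsProbabilityMeasure muI := ⟨by simp [Real.volume_Icc]⟩

lemma pi_pow (μ : Measure ℝ) [IsProbabilityMeasure μ] (f : ℝ → ℝ) :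
    ∀ a : ℕ, ∫ x : Fin a → ℝ, ∏ i, f (x i) ∂(Measure.pi fun _ => μ)
      = (∫ t, f t ∂μ) ^ a := by
  intro a
  induction a with
  | zero => simp
  | succ n ih =>
    rw [← ((measurePreserving_piFinSuccAbove (fun _ : Fin (n+1) => μ) 0).symm).integral_comp']
    have : ∀ x : ℝ × (Fin n → ℝ),
        (∏ i : Fin (n+1), f ((MeasurableEquiv.piFinSuccAbove (fun _ => ℝ) 0).symm x i))
          = f x.1 * ∏ i : Fin n, f (x.2 i) := by
      intro x
      rw [Fin.prod_univ_succ]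
      simp [MeasurableEquiv.piFinSuccAbove, Fin.insertNthEquiv, Fin.zero_succAbove]
    simp_rw [this]
    rw [integral_prod_mul (f := f) (g := fun y : Fin n → ℝ => ∏ i, f (y i)), ih, pow_succ']

lemma jensen_pow {α : Type*} [MeasurableSpace α] (μ : Measure α) [IsProbabilityMeasure μ]
    {f : α → ℝ} (hf : AEStronglyMeasurable f μ) (h0 : ∀ x, 0 ≤ f x) (h1 : ∀ x, f x ≤ 1)
    (n : ℕ) : (∫ x, f x ∂μ) ^ n ≤ ∫ x, f x ^ n ∂μ := by
  have hfi : Integrable f μ :=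
    ⟨hf, HasFiniteIntegral.of_bounded (C := 1) (Filter.Eventually.of_forall fun x => by
      rw [Real.norm_eq_abs, abs_of_nonneg (h0 x)]; exact h1 x)⟩
  have hgi : Integrable (fun x => f x ^ n) μ :=
    ⟨(continuous_pow n).comp_aestronglyMeasurable hf,
      HasFiniteIntegral.of_bounded (C := 1) (Filter.Eventually.of_forall fun x => by
        rw [Real.norm_eq_abs, abs_of_nonneg (pow_nonneg (h0 x) n)]
        exact pow_le_one₀ (h0 x) (h1 x))⟩
  exact ((convexOn_pow n).subset Set.Icc_subset_Ici_self (convex_Icc 0 1)).map_integral_le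
    (continuous_pow n).continuousOn isClosed_Icc
    (Filter.Eventually.of_forall fun x => ⟨h0 x, h1 x⟩) hfi hgi

lemma mem_edge_bip {a b : ℕ} (p : Fin (a+b) × Fin (a+b)) :
    p ∈ edgeFinset' (bip a b) ↔ p.1.val < a ∧ a ≤ p.2.val := by
  simp only [edgeFinset', Finset.mem_filter, Finset.mem_univ, true_and, bip, Fin.lt_def,
    ne_eq, decide_eq_decide]
  constructor
  · rintro ⟨h1, h2⟩
    by_cases h : p.1.val < a
    · exact ⟨h, by omega⟩
    · exact absurd (by omega : (p.2:ℕ) < a → False) (fun hh => hh (by tauto))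
  · rintro ⟨h1, h2⟩
    exact ⟨by omega, by omega⟩

lemma prod_edge_bip (a b : ℕ) (x : Fin (a+b) → ℝ) (W : ℝ → ℝ → ℝ) :
    ∏ p ∈ edgeFinset' (bip a b), W (x p.1) (x p.2)
      = ∏ q : Fin a × Fin b, W (x (Fin.castAdd b q.1)) (x (Fin.natAdd a q.2)) := by
  refine (Finset.prod_bij (fun q _ => (Fin.castAdd b q.1, Fin.natAdd a q.2)) ?_ ?_ ?_ ?_).symm
  · intro q _
    rw [mem_edge_bip]
    exact ⟨q.1.isLt, Nat.le_add_right a q.2⟩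
  · intro q _ q' _ h
    have h1 := congrArg (fun p : Fin (a+b) × Fin (a+b) => (p.1 : ℕ)) h
    have h2 := congrArg (fun p : Fin (a+b) × Fin (a+b) => (p.2 : ℕ)) h
    simp only [Fin.coe_castAdd, Fin.coe_natAdd] at h1 h2
    exact Prod.ext (Fin.ext h1) (Fin.ext (by omega))
  · intro p hp
    rw [mem_edge_bip] at hp
    exact ⟨(⟨p.1.val, hp.1⟩, ⟨p.2.val - a, by omega⟩), Finset.mem_univ _,
      Prod.ext (by ext; simp) (by ext; simp; omega)⟩
  · intro q _; rfl

/-- The measurable equivalence splitting `Fin (a+b) → ℝ` into a pair. -/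
def splitEquiv (a b : ℕ) : ((Fin a → ℝ) × (Fin b → ℝ)) ≃ᵐ (Fin (a+b) → ℝ) :=
  (MeasurableEquiv.sumPiEquivProdPi (fun _ : Fin a ⊕ Fin b => ℝ)).symm.trans
    (MeasurableEquiv.piCongrLeft (fun _ => ℝ) finSumFinEquiv)

lemma splitEquiv_mp (a b : ℕ) :
    MeasurePreserving (splitEquiv a b)
      ((Measure.pi fun _ : Fin a => muI).prod (Measure.pi fun _ : Fin b => muI))
      (Measure.pi fun _ : Fin (a+b) => muI) :=
  (measurePreserving_piCongrLeft (fun _ : Fin (a+b) => muI) finSumFinEquiv).comp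
    (measurePreserving_sumPiEquivProdPi_symm (fun _ : Fin a ⊕ Fin b => muI))

lemma splitEquiv_left (a b : ℕ) (u : Fin a → ℝ) (v : Fin b → ℝ) (i : Fin a) :
    splitEquiv a b (u, v) (Fin.castAdd b i) = u i := by
  rw [← finSumFinEquiv_apply_left]
  simp [splitEquiv, MeasurableEquiv.piCongrLeft, MeasurableEquiv.sumPiEquivProdPi,
    Equiv.piCongrLeft_apply_apply, -finSumFinEquiv_apply_left]

lemma splitEquiv_right (a b : ℕ) (u : Fin a → ℝ) (v : Fin b → ℝ) (j : Fin b) :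
    splitEquiv a b (u, v) (Fin.natAdd a j) = v j := by
  rw [← finSumFinEquiv_apply_right]
  simp [splitEquiv, MeasurableEquiv.piCongrLeft, MeasurableEquiv.sumPiEquivProdPi,
    Equiv.piCongrLeft_apply_apply, -finSumFinEquiv_apply_right]

lemma bip_integrand_integrable (a b : ℕ) {W : ℝ → ℝ → ℝ} (hW : IsGraphon W) :
    Integrable (fun z : (Fin a → ℝ) × (Fin b → ℝ) => ∏ i : Fin a, ∏ j : Fin b, W (z.1 i) (z.2 j))
      ((Measure.pi fun _ : Fin a => muI).prod (Measure.pi fun _ : Fin b => muI)) := by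
  have hm : Measurable (fun z : (Fin a → ℝ) × (Fin b → ℝ) =>
      ∏ i : Fin a, ∏ j : Fin b, W (z.1 i) (z.2 j)) := by
    refine Finset.measurable_prod _ fun i _ => Finset.measurable_prod _ fun j _ => ?_
    have m1 : Measurable fun z : (Fin a → ℝ) × (Fin b → ℝ) => z.1 i :=
      (measurable_pi_apply i).comp measurable_fst
    have m2 : Measurable fun z : (Fin a → ℝ) × (Fin b → ℝ) => z.2 j :=
      (measurable_pi_apply j).comp measurable_snd
    exact hW.1.comp (m1.prodMk m2)
  refine ⟨hm.aestronglyMeasurable, HasFiniteIntegral.of_bounded (C := 1)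
    (Filter.Eventually.of_forall fun z => ?_)⟩
  rw [Real.norm_eq_abs, abs_of_nonneg]
  · exact Finset.prod_le_one (fun i _ => Finset.prod_nonneg fun j _ => (hW.2.2 _ _).1)
      (fun i _ => Finset.prod_le_one (fun j _ => (hW.2.2 _ _).1) (fun j _ => (hW.2.2 _ _).2))
  · exact Finset.prod_nonneg fun i _ => Finset.prod_nonneg fun j _ => (hW.2.2 _ _).1

/-- Two-step factorization of `t(K_{a,b}, W)`: integrate the `a`-side first. -/
lemma bip_density_right (a b : ℕ) {W : ℝ → ℝ → ℝ} (hW : IsGraphon W) :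
    homDensity (bip a b) W
      = ∫ v : Fin b → ℝ, (∫ t, ∏ j, W t (v j) ∂muI) ^ a ∂(Measure.pi fun _ => muI) := by
  rw [homDensity]
  simp_rw [prod_edge_bip a b _ W]
  rw [← (splitEquiv_mp a b).integral_comp']
  have key : ∀ z : (Fin a → ℝ) × (Fin b → ℝ),
      (∏ q : Fin a × Fin b, W (splitEquiv a b z (Fin.castAdd b q.1))
        (splitEquiv a b z (Fin.natAdd a q.2)))
        = ∏ i : Fin a, ∏ j : Fin b, W (z.1 i) (z.2 j) := by
    rintro ⟨u, v⟩
    rw [Fintype.prod_prod_type]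
    simp_rw [splitEquiv_left, splitEquiv_right]
  simp_rw [key]
  rw [integral_prod_symm _ (bip_integrand_integrable a b hW)]
  exact integral_congr_ae (Filter.Eventually.of_forall fun v =>
    pi_pow muI (fun t => ∏ j, W t (v j)) a)

/-- Two-step factorization of `t(K_{a,b}, W)`: integrate the `b`-side first. -/
lemma bip_density_left (a b : ℕ) {W : ℝ → ℝ → ℝ} (hW : IsGraphon W) :
    homDensity (bip a b) W
      = ∫ u : Fin a → ℝ, (∫ t, ∏ i, W (u i) t ∂muI) ^ b ∂(Measure.pi fun _ => muI) := by
  rw [homDensity]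
  simp_rw [prod_edge_bip a b _ W]
  rw [← (splitEquiv_mp a b).integral_comp']
  have key : ∀ z : (Fin a → ℝ) × (Fin b → ℝ),
      (∏ q : Fin a × Fin b, W (splitEquiv a b z (Fin.castAdd b q.1))
        (splitEquiv a b z (Fin.natAdd a q.2)))
        = ∏ i : Fin a, ∏ j : Fin b, W (z.1 i) (z.2 j) := by
    rintro ⟨u, v⟩
    rw [Fintype.prod_prod_type]
    simp_rw [splitEquiv_left, splitEquiv_right]
  simp_rw [key]
  rw [integral_prod _ (bip_integrand_integrable a b hW)]
  refine integral_congr_ae (Filter.Eventually.of_forall fun u => ?_)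
  beta_reduce
  rw [← pi_pow muI (fun t => ∏ i, W (u i) t) b]
  exact integral_congr_ae (Filter.Eventually.of_forall fun v => Finset.prod_comm)

lemma codeg_nonneg {b : ℕ} {W : ℝ → ℝ → ℝ} (hW : IsGraphon W) (v : Fin b → ℝ) :
    0 ≤ ∫ t, ∏ j, W t (v j) ∂muI :=
  integral_nonneg fun t => Finset.prod_nonneg fun j _ => (hW.2.2 _ _).1

lemma codeg_le_one {b : ℕ} {W : ℝ → ℝ → ℝ} (hW : IsGraphon W) (v : Fin b → ℝ) :
    (∫ t, ∏ j, W t (v j) ∂muI) ≤ 1 := by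
  calc (∫ t, ∏ j, W t (v j) ∂muI) ≤ ∫ _, (1:ℝ) ∂muI := by
        refine integral_mono_of_nonneg
          (Filter.Eventually.of_forall fun t => Finset.prod_nonneg fun j _ => (hW.2.2 _ _).1)
          (integrable_const 1)
          (Filter.Eventually.of_forall fun t => Finset.prod_le_one
            (fun j _ => (hW.2.2 _ _).1) (fun j _ => (hW.2.2 _ _).2))
    _ = 1 := by simp

lemma codeg_nonneg' {a : ℕ} {W : ℝ → ℝ → ℝ} (hW : IsGraphon W) (u : Fin a → ℝ) :
    0 ≤ ∫ t, ∏ i, W (u i) t ∂muI :=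
  integral_nonneg fun t => Finset.prod_nonneg fun i _ => (hW.2.2 _ _).1

lemma codeg_le_one' {a : ℕ} {W : ℝ → ℝ → ℝ} (hW : IsGraphon W) (u : Fin a → ℝ) :
    (∫ t, ∏ i, W (u i) t ∂muI) ≤ 1 := by
  calc (∫ t, ∏ i, W (u i) t ∂muI) ≤ ∫ _, (1:ℝ) ∂muI := by
        refine integral_mono_of_nonneg
          (Filter.Eventually.of_forall fun t => Finset.prod_nonneg fun i _ => (hW.2.2 _ _).1)
          (integrable_const 1)
          (Filter.Eventually.of_forall fun t => Finset.prod_le_one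
            (fun i _ => (hW.2.2 _ _).1) (fun i _ => (hW.2.2 _ _).2))
    _ = 1 := by simp

lemma codeg_meas {b : ℕ} {W : ℝ → ℝ → ℝ} (hW : IsGraphon W) :
    StronglyMeasurable (fun v : Fin b → ℝ => ∫ t, ∏ j, W t (v j) ∂muI) := by
  have hk : StronglyMeasurable (fun p : (Fin b → ℝ) × ℝ => ∏ j, W p.2 (p.1 j)) := by
    refine Measurable.stronglyMeasurable ?_
    refine Finset.measurable_prod _ fun j _ => ?_
    have m1 : Measurable fun p : (Fin b → ℝ) × ℝ => p.2 := measurable_snd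
    have m2 : Measurable fun p : (Fin b → ℝ) × ℝ => p.1 j :=
      (measurable_pi_apply j).comp measurable_fst
    exact hW.1.comp (m1.prodMk m2)
  exact hk.integral_prod_right'

lemma codeg_meas' {a : ℕ} {W : ℝ → ℝ → ℝ} (hW : IsGraphon W) :
    StronglyMeasurable (fun u : Fin a → ℝ => ∫ t, ∏ i, W (u i) t ∂muI) := by
  have hk : StronglyMeasurable (fun p : (Fin a → ℝ) × ℝ => ∏ i, W (p.1 i) p.2) := by
    refine Measurable.stronglyMeasurable ?_
    refine Finset.measurable_prod _ fun i _ => ?_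
    have m1 : Measurable fun p : (Fin a → ℝ) × ℝ => p.1 i :=
      (measurable_pi_apply i).comp measurable_fst
    have m2 : Measurable fun p : (Fin a → ℝ) × ℝ => p.2 := measurable_snd
    exact hW.1.comp (m1.prodMk m2)
  exact hk.integral_prod_right'

/-- `t(K_{2n,2n}, W) ≥ t(K_{2,2}, W)^{n²}`. -/
theorem knn_density (n : ℕ) (hn : 1 ≤ n) (W : ℝ → ℝ → ℝ) (hW : IsGraphon W) :
    homDensity (bip 2 2) W ^ (n ^ 2) ≤ homDensity (bip (2 * n) (2 * n)) W := by
  -- Step 1: t(K_{2,2})^n ≤ t(K_{2,2n})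
  have step1 : homDensity (bip 2 2) W ^ n ≤ homDensity (bip 2 (2 * n)) W := by
    rw [bip_density_left 2 2 hW, bip_density_left 2 (2 * n) hW]
    have h := jensen_pow (Measure.pi fun _ : Fin 2 => muI)
      (f := fun u : Fin 2 → ℝ => (∫ t, ∏ i, W (u i) t ∂muI) ^ 2)
      (((codeg_meas' hW).measurable.pow_const 2).aestronglyMeasurable)
      (fun u => pow_nonneg (codeg_nonneg' hW u) 2)
      (fun u => pow_le_one₀ (codeg_nonneg' hW u) (codeg_le_one' hW u)) n
    simp_rw [← pow_mul] at h
    exact h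
  have step2 : homDensity (bip 2 (2 * n)) W ^ n ≤ homDensity (bip (2 * n) (2 * n)) W := by
    rw [bip_density_right 2 (2 * n) hW, bip_density_right (2 * n) (2 * n) hW]
    have h := jensen_pow (Measure.pi fun _ : Fin (2 * n) => muI)
      (f := fun v : Fin (2 * n) → ℝ => (∫ t, ∏ j, W t (v j) ∂muI) ^ 2)
      (((codeg_meas hW).measurable.pow_const 2).aestronglyMeasurable)
      (fun v => pow_nonneg (codeg_nonneg hW v) 2)
      (fun v => pow_le_one₀ (codeg_nonneg hW v) (codeg_le_one hW v)) n
    simp_rw [← pow_mul] at h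
    exact h
  have hnn : 0 ≤ homDensity (bip 2 2) W := by
    rw [bip_density_left 2 2 hW]
    exact integral_nonneg fun u => pow_nonneg (codeg_nonneg' hW u) 2
  calc homDensity (bip 2 2) W ^ (n ^ 2) = (homDensity (bip 2 2) W ^ n) ^ n := by
        rw [← pow_mul, sq]
    _ ≤ homDensity (bip 2 (2 * n)) W ^ n :=
        pow_le_pow_left₀ (pow_nonneg hnn n) step1 n
    _ ≤ homDensity (bip (2 * n) (2 * n)) W := step2
end
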